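/- Private Hoeffding confidence sequence: under the setup where Z_1, Z_2, ... are [0,1]-valued with E[Z_t | 𝒵_{t-1}] = r_t μ* + (1-r_t)/2 and λ_t > 0, define μ̂_t := (Σ_{i=1}^t λ_i (Z_i - (1-r_i)/2)) / (Σ_{i=1}^t r_i λ_i) and B_t := (log(1/α) + Σ_{i=1}^t λ_i²/8) / (Σ_{i=1}^t r_i λ_i). Then P(∃ t ≥ 1 : μ* < μ̂_t - B_t) ≤ α. -/

import Mathlib

open MeasureTheory Finset
open scoped ProbabilityTheory

section NPRRAux
open MeasureTheory Finset Real

lemma hoeffding_aux {m x : ℝ} (hm0 : 0 ≤ m) (hm1 : m ≤ 1) (hx : 0 ≤ x) :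
    1 - m + m * Real.exp x ≤ Real.exp (x * m + x ^ 2 / 8) := by
  set D : ℝ → ℝ := fun t => 1 - m + m * Real.exp t with hD
  have hDpos : ∀ t, 0 < D t := by
    intro t
    have := Real.exp_pos t
    simp only [hD]
    nlinarith [Real.exp_pos t, mul_nonneg hm0 (Real.exp_pos t).le, mul_le_mul_of_nonneg_right hm1 (Real.exp_pos t).le]
  have hDd : ∀ t, HasDerivAt D (m * Real.exp t) t := by
    intro t
    simpa [hD] using ((Real.hasDerivAt_exp t).const_mul m).const_add (1 - m)
  set φ : ℝ → ℝ := fun t => m + t / 4 - m * Real.exp t / D t with hφ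
  set g : ℝ → ℝ := fun t => t * m + t ^ 2 / 8 - Real.log (D t) with hg
  have hgd : ∀ t, HasDerivAt g (φ t) t := by
    intro t
    have h1 : HasDerivAt (fun t : ℝ => t * m + t ^ 2 / 8) (m + t / 4) t := by
      have := ((hasDerivAt_id t).mul_const m).add (((hasDerivAt_pow 2 t)).div_const 8)
      exact this.congr_deriv (by norm_num; ring)
    have h2 : HasDerivAt (fun t => Real.log (D t)) (m * Real.exp t / D t) t :=
      (hDd t).log (hDpos t).ne'
    exact h1.sub h2
  have hφd : ∀ t, HasDerivAt φ (1 / 4 - m * Real.exp t * (1 - m) / (D t) ^ 2) t := by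
    intro t
    have h1 : HasDerivAt (fun t : ℝ => m + t / 4) (1 / 4) t := by
      simpa using ((hasDerivAt_id t).div_const 4).const_add m
    have h2 : HasDerivAt (fun t => m * Real.exp t / D t)
        ((m * Real.exp t * D t - m * Real.exp t * (m * Real.exp t)) / (D t) ^ 2) t :=
      ((Real.hasDerivAt_exp t).const_mul m).div (hDd t) (hDpos t).ne'
    have : m * Real.exp t * D t - m * Real.exp t * (m * Real.exp t)
        = m * Real.exp t * (1 - m) := by simp only [hD]; ring
    rw [this] at h2
    exact h1.sub h2
  have hφnonneg : ∀ t, 0 ≤ t → 0 ≤ φ t := by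
    intro t ht
    have hmono : MonotoneOn φ (Set.Ici (0:ℝ)) := by
      apply monotoneOn_of_deriv_nonneg (convex_Ici 0)
      · exact (Differentiable.continuous (fun t => (hφd t).differentiableAt)).continuousOn
      · intro s _; exact (hφd s).differentiableAt.differentiableWithinAt
      · intro s _
        rw [(hφd s).deriv]
        have hDs := hDpos s
        have hes := Real.exp_pos s
        have key : 4 * (m * Real.exp s * (1 - m)) ≤ (D s) ^ 2 := by
          have : (D s) ^ 2 - 4 * (m * Real.exp s * (1 - m))
              = ((1 - m) - m * Real.exp s) ^ 2 := by simp only [hD]; ring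
          nlinarith [sq_nonneg ((1 - m) - m * Real.exp s)]
        have : m * Real.exp s * (1 - m) / (D s) ^ 2 ≤ 1 / 4 := by
          rw [div_le_div_iff₀ (by positivity) (by norm_num)]
          linarith
        linarith
    have hφ0 : φ 0 = 0 := by simp [hφ, hD]
    have := hmono (Set.self_mem_Ici) (Set.mem_Ici.2 ht) ht
    rw [hφ0] at this; exact this
  have hgmono : MonotoneOn g (Set.Ici (0:ℝ)) := by
    apply monotoneOn_of_deriv_nonneg (convex_Ici 0)
    · exact (Differentiable.continuous (fun t => (hgd t).differentiableAt)).continuousOn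
    · intro s _; exact (hgd s).differentiableAt.differentiableWithinAt
    · intro s hs
      rw [(hgd s).deriv]
      exact hφnonneg s (le_of_lt (by simpa using hs))
  have hg0 : g 0 = 0 := by simp [hg, hD]
  have hgx : 0 ≤ g x := by
    have := hgmono Set.self_mem_Ici (Set.mem_Ici.2 hx) hx
    rwa [hg0] at this
  have : Real.log (D x) ≤ x * m + x ^ 2 / 8 := by simp only [hg] at hgx; linarith
  calc D x ≤ Real.exp (Real.log (D x)) := by rw [Real.exp_log (hDpos x)]
    _ ≤ _ := Real.exp_le_exp.2 this

lemma convex_exp_bound {z x : ℝ} (hz0 : 0 ≤ z) (hz1 : z ≤ 1) :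
    Real.exp (x * z) ≤ 1 - z + z * Real.exp x := by
  have h := convexOn_exp.2 (Set.mem_univ (0:ℝ)) (Set.mem_univ x)
    (by linarith : (0:ℝ) ≤ 1 - z) hz0 (by ring)
  simpa [Real.exp_zero, mul_comm] using h



lemma ville_ineq {Ω : Type*} [m0 : MeasurableSpace Ω] (μ : Measure Ω) [IsProbabilityMeasure μ]
    (𝒢 : Filtration ℕ m0) (f : ℕ → Ω → ℝ) (hf : Supermartingale f 𝒢 μ)
    (hnonneg : ∀ n ω, 0 ≤ f n ω) (hf0 : ∀ ω, f 0 ω = 1) {c : ℝ} (hc : 0 < c) :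
    μ {ω | ∃ t, c ≤ f t ω} ≤ ENNReal.ofReal (1 / c) := by
  set A : ℕ → Set Ω := fun n => {ω | ∃ k ≤ n, c ≤ f k ω} with hA
  have hAmeas : ∀ n, MeasurableSet (A n) := by
    intro n
    have : A n = ⋃ k ∈ Set.Iic n, {ω | c ≤ f k ω} := by
      ext ω; simp [hA]
    rw [this]
    refine MeasurableSet.biUnion (Set.to_countable _) fun k _ => ?_
    exact measurableSet_le measurable_const
      ((hf.stronglyAdapted k).measurable.mono (𝒢.le k) le_rfl)
  have hmono : Monotone A := by
    intro a b hab ω ⟨k, hk, hck⟩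
    exact ⟨k, hk.trans hab, hck⟩
  have hsub : {ω | ∃ t, c ≤ f t ω} ⊆ ⋃ n, A n := by
    rintro ω ⟨t, ht⟩
    exact Set.mem_iUnion.2 ⟨t, t, le_rfl, ht⟩
  have key : ∀ n, μ (A n) ≤ ENNReal.ofReal (1 / c) := by
    intro n
    set τ : Ω → WithTop ℕ := fun ω => (hittingBtwn f (Set.Ici c) 0 n ω : ℕ) with hτdef
    have hτ : IsStoppingTime 𝒢 τ := Adapted.isStoppingTime_hittingBtwn (fun k => (hf.stronglyAdapted k).measurable) measurableSet_Ici
    have hτle : ∀ ω, τ ω ≤ n := fun ω => WithTop.coe_le_coe.2 (hittingBtwn_le ω)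
    -- expected stopped value ≤ 1
    have hsubm : Submartingale (-f) 𝒢 μ := hf.neg
    have hint : Integrable (stoppedValue f τ) μ := by
      have := hsubm.integrable_stoppedValue hτ hτle
      have heq : stoppedValue (-f) τ = -(stoppedValue f τ) := rfl
      rw [heq] at this
      simpa using this.neg
    have hexp : μ[stoppedValue f τ] ≤ μ[f 0] := by
      have h := hsubm.expected_stoppedValue_mono (isStoppingTime_const 𝒢 0) hτ
        (fun ω => WithTop.coe_le_coe.2 (Nat.zero_le _)) hτle
      rw [stoppedValue_const] at h
      have h1 : μ[stoppedValue (-f) τ] = -μ[stoppedValue f τ] := by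
        have heq : stoppedValue (-f) τ = -(stoppedValue f τ) := rfl
        rw [heq]
        exact integral_neg _
      have h2 : μ[(-f) 0] = -μ[f 0] := by
        have heq : (-f) 0 = -(f 0) := rfl
        rw [heq]
        exact integral_neg _
      rw [h1, h2] at h
      linarith
    have hf0int : μ[f 0] = 1 := by
      have : (fun ω => f 0 ω) = fun _ => (1:ℝ) := funext hf0
      rw [show f 0 = fun _ => (1:ℝ) from funext hf0]
      simp
    have hsvnonneg : 0 ≤ᵐ[μ] stoppedValue f τ :=
      Filter.Eventually.of_forall fun ω => hnonneg _ ω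
    have hge : ∀ ω ∈ A n, c ≤ stoppedValue f τ ω := by
      intro ω hω
      obtain ⟨k, hk, hck⟩ := hω
      have : stoppedValue f τ ω ∈ Set.Ici c :=
        stoppedValue_hittingBtwn_mem ⟨k, ⟨Nat.zero_le _, hk⟩, hck⟩
      exact this
    have h1 : c * (μ (A n)).toReal ≤ ∫ ω in A n, stoppedValue f τ ω ∂μ :=
      setIntegral_ge_of_const_le_real (hAmeas n) (measure_ne_top μ _) hge hint.integrableOn
    have h2 : ∫ ω in A n, stoppedValue f τ ω ∂μ ≤ μ[stoppedValue f τ] :=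
      setIntegral_le_integral hint hsvnonneg
    have h3 : c * (μ (A n)).toReal ≤ 1 := by
      rw [hf0int] at hexp; linarith
    have h4 : (μ (A n)).toReal ≤ 1 / c := by
      rw [le_div_iff₀ hc]; linarith
    rw [ENNReal.le_ofReal_iff_toReal_le (measure_ne_top μ _) (by positivity)]
    exact h4
  calc μ {ω | ∃ t, c ≤ f t ω} ≤ μ (⋃ n, A n) := measure_mono hsub
    _ = ⨆ n, μ (A n) := hmono.measure_iUnion
    _ ≤ ENNReal.ofReal (1 / c) := iSup_le key

end NPRRAux


/-- Private Hoeffding confidence sequence: with `Z_t ∈ [0,1]` having conditional mean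
`r_t μ* + (1-r_t)/2` given the past and `λ_t > 0`, the lower bounds
`μ̂_t - B_t` with `μ̂_t = (Σ λ_i (Z_i - (1-r_i)/2)) / (Σ r_i λ_i)` and
`B_t = (log(1/α) + Σ λ_i²/8) / (Σ r_i λ_i)` satisfy
`P(∃ t ≥ 1 : μ* < μ̂_t - B_t) ≤ α`. -/
theorem nprr_hoeffding_confidence_sequence
    {Ω : Type*} [m0 : MeasurableSpace Ω] (μ : Measure Ω) [IsProbabilityMeasure μ]
    (𝒵 : Filtration ℕ m0) (Z : ℕ → Ω → ℝ) (hZ : Adapted 𝒵 Z)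
    (r : ℕ → Ω → ℝ) (l : ℕ → ℝ) (μstar : ℝ) (α : ℝ)
    (hμstar : μstar ∈ Set.Icc (0 : ℝ) 1) (hα : α ∈ Set.Ioo (0 : ℝ) 1)
    (hl : ∀ t, 0 < l t)
    (hrval : ∀ t ω, r t ω ∈ Set.Ioc (0 : ℝ) 1)
    (hrpred : ∀ t, 1 ≤ t → Measurable[𝒵 (t - 1)] (r t))
    (hZbdd : ∀ t, 1 ≤ t → ∀ᵐ ω ∂μ, Z t ω ∈ Set.Icc (0 : ℝ) 1)
    (hZint : ∀ t, Integrable (Z t) μ)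
    (hcond : ∀ t, 1 ≤ t →
      μ[Z t|𝒵 (t - 1)] =ᵐ[μ] fun ω => r t ω * μstar + (1 - r t ω) / 2) :
    μ {ω | ∃ t, 1 ≤ t ∧ μstar <
        (∑ i ∈ Finset.Icc 1 t, l i * (Z i ω - (1 - r i ω) / 2)) /
          (∑ i ∈ Finset.Icc 1 t, r i ω * l i) -
        (Real.log (1 / α) + ∑ i ∈ Finset.Icc 1 t, (l i) ^ 2 / 8) /
          (∑ i ∈ Finset.Icc 1 t, r i ω * l i)}
      ≤ ENNReal.ofReal α := by
  obtain ⟨hα0, hα1⟩ := hα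
  obtain ⟨hμ0, hμ1⟩ := hμstar
  -- notation
  set ζ : ℕ → Ω → ℝ := fun i ω => r i ω * μstar + (1 - r i ω) / 2 with hζdef
  set X : ℕ → Ω → ℝ := fun i ω => l i * (Z i ω - ζ i ω) - (l i) ^ 2 / 8 with hXdef
  set M : ℕ → Ω → ℝ := fun t ω => Real.exp (∑ i ∈ Finset.Icc 1 t, X i ω) with hMdef
  have hζmem : ∀ i ω, ζ i ω ∈ Set.Icc (0:ℝ) 1 := by
    intro i ω
    obtain ⟨hr0, hr1⟩ := hrval i ω
    simp only [hζdef]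
    constructor
    · nlinarith
    · nlinarith
  have hζmeas : ∀ i, 1 ≤ i → Measurable[𝒵 (i-1)] (ζ i) := by
    intro i hi
    exact ((hrpred i hi).mul_const μstar).add
      (((measurable_const.sub (hrpred i hi)).div_const 2))
  have hXmeas : ∀ t i, 1 ≤ i → i ≤ t → Measurable[𝒵 t] (X i) := by
    intro t i hi1 hit
    have hZm : Measurable[𝒵 t] (Z i) := (hZ i).mono (𝒵.mono hit) le_rfl
    have hζm : Measurable[𝒵 t] (ζ i) :=
      (hζmeas i hi1).mono (𝒵.mono (by omega : i - 1 ≤ t)) le_rfl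
    exact ((hZm.sub hζm).const_mul (l i)).sub measurable_const
  have hMmeas : ∀ t, Measurable[𝒵 t] (M t) := by
    intro t
    apply Measurable.exp
    apply Finset.measurable_sum
    intro i hi
    obtain ⟨hi1, hi2⟩ := Finset.mem_Icc.1 hi
    exact hXmeas t i hi1 hi2
  have hMadp : StronglyAdapted 𝒵 M := fun t => (hMmeas t).stronglyMeasurable
  have haeZ : ∀ t, ∀ᵐ ω ∂μ, ∀ i ∈ Finset.Icc 1 t, Z i ω ∈ Set.Icc (0:ℝ) 1 := by
    intro t
    rw [Filter.eventually_all_finset]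
    intro i hi
    exact hZbdd i (Finset.mem_Icc.1 hi).1
  have hMnonneg : ∀ t ω, 0 ≤ M t ω := fun t ω => (Real.exp_pos _).le
  have hMint : ∀ t, Integrable (M t) μ := by
    intro t
    refine Integrable.mono' (integrable_const (Real.exp (∑ i ∈ Finset.Icc 1 t, l i)))
      (((hMmeas t).mono (𝒵.le t) le_rfl).aestronglyMeasurable) ?_
    filter_upwards [haeZ t] with ω hω
    rw [Real.norm_of_nonneg (hMnonneg t ω)]
    apply Real.exp_le_exp.2
    apply Finset.sum_le_sum
    intro i hi
    obtain ⟨hZ0, hZ1⟩ := hω i hi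
    obtain ⟨hζ0, hζ1⟩ := hζmem i ω
    have hli := hl i
    have hX : X i ω = l i * (Z i ω - ζ i ω) - l i ^ 2 / 8 := by simp only [hXdef]
    rw [hX]
    generalize hv : ζ i ω = v at hζ0 hζ1 ⊢
    generalize hw : Z i ω = w at hZ0 hZ1 ⊢
    nlinarith [mul_le_mul_of_nonneg_left (by linarith : w - v ≤ 1) hli.le,
      sq_nonneg (l i)]
  -- the supermartingale step
  have hstep : ∀ t, μ[M (t+1)|𝒵 t] ≤ᵐ[μ] M t := by
    intro t
    set lam := l (t+1) with hlamdef
    have hlam : 0 < lam := hl _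
    clear_value lam
    set ρ : Ω → ℝ := ζ (t+1) with hρdef
    have hρmeas : Measurable[𝒵 t] ρ := hζmeas (t+1) (by omega)
    have hρmem : ∀ ω, ρ ω ∈ Set.Icc (0:ℝ) 1 := hζmem (t+1)
    set c : Ω → ℝ := fun ω => Real.exp (-(lam * ρ ω) - lam ^ 2 / 8) with hcdef
    have hcmeas : Measurable[𝒵 t] c :=
      (((hρmeas.const_mul lam).neg).sub measurable_const).exp
    have hcpos : ∀ ω, 0 < c ω := fun ω => Real.exp_pos _
    have hcle : ∀ ω, c ω ≤ 1 := by
      intro ω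
      rw [hcdef]
      rw [show (1:ℝ) = Real.exp 0 by simp]
      apply Real.exp_le_exp.2
      have := (hρmem ω).1
      generalize hp : ρ ω = p at this ⊢
      nlinarith [mul_nonneg hlam.le this, sq_nonneg lam]
    set E : Ω → ℝ := fun ω => Real.exp (X (t+1) ω) with hEdef
    have hMsplit : M (t+1) = fun ω => M t ω * E ω := by
      funext ω
      simp only [hMdef, hEdef]
      rw [← Real.exp_add]
      congr 1
      rw [← Finset.insert_Icc_right_eq_Icc_add_one (by omega : 1 ≤ t + 1),
        Finset.sum_insert (by simp)]
      ring
    have hEmeas : Measurable[m0] E := by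
      have := hXmeas (t+1) (t+1) (by omega) le_rfl
      exact (this.mono (𝒵.le (t+1)) le_rfl).exp
    have hEint : Integrable E μ := by
      refine Integrable.mono' (integrable_const (Real.exp lam))
        hEmeas.aestronglyMeasurable ?_
      filter_upwards [hZbdd (t+1) (by omega)] with ω hω
      rw [Real.norm_of_nonneg (Real.exp_pos _).le]
      apply Real.exp_le_exp.2
      obtain ⟨h0, h1⟩ := hω
      obtain ⟨hρ0, hρ1⟩ := hρmem ω
      have hX : X (t+1) ω = l (t+1) * (Z (t+1) ω - ζ (t+1) ω) - l (t+1) ^ 2 / 8 := by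
        simp only [hXdef]
      have hζρ : ζ (t+1) ω = ρ ω := (congrFun hρdef ω).symm
      rw [hX, hζρ, ← hlamdef]
      generalize hp : ρ ω = p at hρ0 hρ1 ⊢
      generalize hw : Z (t+1) ω = w at h0 h1 ⊢
      nlinarith [mul_le_mul_of_nonneg_left (by linarith : w - p ≤ 1) hlam.le,
        sq_nonneg lam]
    set g : Ω → ℝ := fun ω => c ω + (c ω * (Real.exp lam - 1)) * Z (t+1) ω with hgdef
    have hEg : E ≤ᵐ[μ] g := by
      filter_upwards [hZbdd (t+1) (by omega)] with ω hω
      obtain ⟨h0, h1⟩ := hω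
      have hEeq : E ω = c ω * Real.exp (lam * Z (t+1) ω) := by
        simp only [hEdef, hcdef, hXdef, hρdef, hζdef, hlamdef, ← Real.exp_add]
        congr 1
        ring
      rw [hEeq]
      have hconv := convex_exp_bound h0 h1 (x := lam)
      have := mul_le_mul_of_nonneg_left hconv (hcpos ω).le
      calc c ω * Real.exp (lam * Z (t+1) ω) ≤ c ω * (1 - Z (t+1) ω + Z (t+1) ω * Real.exp lam) := this
        _ = g ω := by simp only [hgdef]; ring
    have hcint : Integrable c μ := by
      refine Integrable.mono' (integrable_const 1)
        ((hcmeas.mono (𝒵.le t) le_rfl).aestronglyMeasurable) ?_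
      apply Filter.Eventually.of_forall
      intro ω
      rw [Real.norm_of_nonneg (hcpos ω).le]
      exact hcle ω
    have hgZint : Integrable (fun ω => (c ω * (Real.exp lam - 1)) * Z (t+1) ω) μ := by
      refine Integrable.bdd_mul (c := |Real.exp lam - 1|) (hZint (t+1))
        (((hcmeas.mono (𝒵.le t) le_rfl).mul_const _).aestronglyMeasurable) ?_
      refine Filter.Eventually.of_forall (fun ω => ?_)
      rw [norm_mul, Real.norm_of_nonneg (hcpos ω).le, Real.norm_eq_abs]
      calc c ω * |Real.exp lam - 1| ≤ 1 * |Real.exp lam - 1| :=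
            mul_le_mul_of_nonneg_right (hcle ω) (abs_nonneg _)
        _ = |Real.exp lam - 1| := one_mul _
    have hgint : Integrable g μ := hcint.add hgZint
    have hME_int : Integrable (fun ω => M t ω * E ω) μ := by
      rw [← hMsplit]; exact hMint (t+1)
    have hpull : μ[M (t+1)|𝒵 t] =ᵐ[μ] fun ω => M t ω * (μ[E|𝒵 t]) ω := by
      rw [hMsplit]
      have := condExp_mul_of_stronglyMeasurable_left (μ := μ) (m := 𝒵 t)
        (hMmeas t).stronglyMeasurable hME_int hEint
      exact this
    have hcondZ : μ[Z (t+1)|𝒵 t] =ᵐ[μ] ρ := by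
      have h := hcond (t+1) (by omega)
      simpa [Nat.add_sub_cancel] using h
    have hcondg : μ[g|𝒵 t] =ᵐ[μ] fun ω => c ω + (c ω * (Real.exp lam - 1)) * ρ ω := by
      have h1 : μ[g|𝒵 t] =ᵐ[μ]
          μ[c|𝒵 t] + μ[fun ω => (c ω * (Real.exp lam - 1)) * Z (t+1) ω|𝒵 t] :=
        condExp_add hcint hgZint _
      have h2 : μ[c|𝒵 t] = c :=
        condExp_of_stronglyMeasurable (𝒵.le t) hcmeas.stronglyMeasurable hcint
      have h3 : μ[fun ω => (c ω * (Real.exp lam - 1)) * Z (t+1) ω|𝒵 t] =ᵐ[μ]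
          fun ω => (c ω * (Real.exp lam - 1)) * (μ[Z (t+1)|𝒵 t]) ω := by
        have := condExp_mul_of_stronglyMeasurable_left (μ := μ) (m := 𝒵 t)
          ((hcmeas.mul_const (Real.exp lam - 1)).stronglyMeasurable) hgZint (hZint (t+1))
        exact this
      filter_upwards [h1, h3, hcondZ] with ω hω1 hω3 hωZ
      rw [hω1]
      simp only [Pi.add_apply, h2]
      rw [hω3, hωZ]
    have hcondE : μ[E|𝒵 t] ≤ᵐ[μ] fun _ => (1:ℝ) := by
      have h1 : μ[E|𝒵 t] ≤ᵐ[μ] μ[g|𝒵 t] := condExp_mono hEint hgint hEg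
      refine h1.trans (hcondg.trans_le (Filter.Eventually.of_forall fun ω => ?_))
      obtain ⟨hρ0, hρ1⟩ := hρmem ω
      have hhoef := hoeffding_aux hρ0 hρ1 hlam.le (x := lam)
      have hkey : c ω * (1 - ρ ω + ρ ω * Real.exp lam) ≤
          c ω * Real.exp (lam * ρ ω + lam ^ 2 / 8) :=
        mul_le_mul_of_nonneg_left hhoef (hcpos ω).le
      have hone : c ω * Real.exp (lam * ρ ω + lam ^ 2 / 8) = 1 := by
        simp only [hcdef, ← Real.exp_add]
        rw [show -(lam * ρ ω) - lam ^ 2 / 8 + (lam * ρ ω + lam ^ 2 / 8) = 0 by ring]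
        exact Real.exp_zero
      calc c ω + c ω * (Real.exp lam - 1) * ρ ω
          = c ω * (1 - ρ ω + ρ ω * Real.exp lam) := by ring
        _ ≤ c ω * Real.exp (lam * ρ ω + lam ^ 2 / 8) := hkey
        _ = 1 := hone
    filter_upwards [hpull, hcondE] with ω h1 h2
    rw [h1]
    calc M t ω * (μ[E|𝒵 t]) ω ≤ M t ω * 1 :=
          mul_le_mul_of_nonneg_left h2 (hMnonneg t ω)
      _ = M t ω := mul_one _
  have hsuper : Supermartingale M 𝒵 μ := supermartingale_nat hMadp hMint hstep
  have hville := ville_ineq μ 𝒵 M hsuper hMnonneg (fun ω => by simp [hMdef])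
    (c := 1/α) (by positivity)
  rw [one_div_one_div] at hville
  refine le_trans (measure_mono ?_) hville
  rintro ω ⟨t, ht1, hlt⟩
  refine ⟨t, ?_⟩
  set R := ∑ i ∈ Finset.Icc 1 t, r i ω * l i with hRdef
  have hR : 0 < R := by
    apply Finset.sum_pos
    · intro i hi
      exact mul_pos (hrval i ω).1 (hl i)
    · exact Finset.nonempty_Icc.2 ht1
  rw [div_sub_div_same, lt_div_iff₀ hR] at hlt
  have hsum : ∑ i ∈ Finset.Icc 1 t, X i ω =
      (∑ i ∈ Finset.Icc 1 t, l i * (Z i ω - (1 - r i ω) / 2)) - μstar * R -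
        ∑ i ∈ Finset.Icc 1 t, (l i) ^ 2 / 8 := by
    rw [hRdef, Finset.mul_sum]
    rw [← Finset.sum_sub_distrib, ← Finset.sum_sub_distrib]
    apply Finset.sum_congr rfl
    intro i _
    simp only [hXdef, hζdef]
    ring
  have hlog : Real.log (1/α) < ∑ i ∈ Finset.Icc 1 t, X i ω := by
    rw [hsum]; linarith
  have : 1/α < M t ω := by
    simp only [hMdef]
    calc 1/α = Real.exp (Real.log (1/α)) := (Real.exp_log (by positivity)).symm
      _ < _ := Real.exp_lt_exp.2 hlog
  exact this.le
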